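/- Let W be a real m×n matrix, X a real n×k matrix, and r a natural number. Let U_r be the m×r matrix whose columns are the first r left singular vectors of WX. Then W' = U_r U_rᵀ W has rank at most r and minimizes ‖WX − W'X‖_F over all m×n matrices W' of rank at most r. -/

import Mathlib

open Matrix BigOperators

/-- Frobenius norm of a real matrix. -/
noncomputable def frobNorm {α β : Type*} [Fintype α] [Fintype β]
    (A : Matrix α β ℝ) : ℝ :=
  Real.sqrt (∑ i, ∑ j, (A i j) ^ 2)

lemma exists_proj {m k : ℕ} (r : ℕ) (B : Matrix (Fin m) (Fin k) ℝ) (hB : B.rank ≤ r) :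
    ∃ P : Matrix (Fin m) (Fin m) ℝ, Pᵀ = P ∧ P * P = P ∧ P.trace ≤ (r : ℝ) ∧ P * B = B := by
  classical
  let S : Submodule ℝ (EuclideanSpace ℝ (Fin m)) := (LinearMap.range B.mulVecLin).map (WithLp.linearEquiv 2 ℝ (Fin m → ℝ)).symm.toLinearMap
  have hd : Module.finrank ℝ S = B.rank := LinearEquiv.finrank_map_eq _ _
  set d := Module.finrank ℝ S with hdd
  have hdr : d ≤ r := by rw [hd]; exact hB
  let b : OrthonormalBasis (Fin d) ℝ S := stdOrthonormalBasis ℝ S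
  let C : Matrix (Fin m) (Fin r) ℝ := fun i j =>
    if h : (j : ℕ) < d then ((b ⟨j, h⟩ : S) : EuclideanSpace ℝ (Fin m)) i else 0
  -- C^T C is diagonal 0/1
  have hCtC : Cᵀ * C = Matrix.diagonal (fun j : Fin r => if (j : ℕ) < d then (1:ℝ) else 0) := by
    ext j j'
    rw [Matrix.mul_apply]; simp only [Matrix.transpose_apply, Matrix.diagonal_apply]; simp only [C]
    by_cases h : (j : ℕ) < d
    · by_cases h' : (j' : ℕ) < d
      · simp only [dif_pos h, dif_pos h']
        have horth := b.orthonormal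
        rw [orthonormal_iff_ite] at horth
        have h2 := horth ⟨j, h⟩ ⟨j', h'⟩
        rw [Submodule.coe_inner, PiLp.inner_apply] at h2
        simp only [RCLike.inner_apply, conj_trivial] at h2
        rw [(Finset.sum_congr rfl (fun _ _ => mul_comm _ _)).trans h2]
        simp [Fin.ext_iff, h]
      · have hne : j ≠ j' := by rintro rfl; exact h' h
        simp [dif_neg h', hne]
    · have hz : ∀ i, (if h : (j : ℕ) < d then ((b ⟨j, h⟩ : S) : EuclideanSpace ℝ (Fin m)) i else 0) = 0 := by
        intro i; rw [dif_neg h]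
      simp [hz, h]
  -- P v = v for v in S
  have hfix : ∀ v : EuclideanSpace ℝ (Fin m), v ∈ S → (C * Cᵀ).mulVec v = v := by
    intro v hv
    have hrepr := b.sum_repr' ⟨v, hv⟩
    have hco := congrArg (fun x : S => (x : EuclideanSpace ℝ (Fin m)).ofLp) hrepr
    funext i
    have hco_i := congrFun hco i
    simp only [Submodule.coe_sum, Submodule.coe_smul, WithLp.ofLp_sum, WithLp.ofLp_smul] at hco_i
    rw [Matrix.mulVec, dotProduct]
    simp only [Matrix.mul_apply, Matrix.transpose_apply]
    have hswap : ∑ x, (∑ t : Fin r, C i t * C x t) * v x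
        = ∑ t : Fin r, (∑ l, C l t * v l) * C i t := by
      simp_rw [Finset.sum_mul]
      rw [Finset.sum_comm]
      apply Finset.sum_congr rfl
      intro t _
      apply Finset.sum_congr rfl
      intro l _
      ring
    rw [hswap]
    have key : ∑ t : Fin r, (∑ l, C l t * v l) * C i t = v i := by
      have hmem : ∀ t : Fin r, t ∈ Finset.univ.map (Fin.castLEEmb hdr) ↔ (t : ℕ) < d := by
        intro t
        simp only [Finset.mem_map, Finset.mem_univ, true_and]
        constructor
        · rintro ⟨x, rfl⟩; exact x.isLt
        · intro ht; exact ⟨⟨t, ht⟩, Fin.ext rfl⟩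
      rw [← Finset.sum_subset (Finset.subset_univ (Finset.univ.map (Fin.castLEEmb hdr)))
        (fun t _ ht => by
          have : ¬ (t : ℕ) < d := fun hc => ht ((hmem t).2 hc)
          simp [C, dif_neg this])]
      rw [Finset.sum_map]
      rw [← hco_i]
      rw [Finset.sum_apply]
      apply Finset.sum_congr rfl
      intro x _
      have hx : ((Fin.castLEEmb hdr x : Fin r) : ℕ) < d := x.isLt
      have hxe : (⟨((Fin.castLEEmb hdr x : Fin r) : ℕ), hx⟩ : Fin d) = x := Fin.ext rfl
      simp only [C, dif_pos hx, hxe, Pi.smul_apply, smul_eq_mul]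
      congr 1
      rw [Submodule.coe_inner, PiLp.inner_apply]
      simp only [RCLike.inner_apply, conj_trivial]
      exact Finset.sum_congr rfl (fun _ _ => mul_comm _ _)
    exact key
  refine ⟨C * Cᵀ, by rw [Matrix.transpose_mul, Matrix.transpose_transpose], ?_, ?_, ?_⟩
  · -- idempotent
    have hCe : C * Matrix.diagonal (fun j : Fin r => if (j : ℕ) < d then (1:ℝ) else 0) = C := by
      ext i j
      rw [Matrix.mul_diagonal]
      by_cases h : (j : ℕ) < d
      · simp [h]
      · simp [h, C, dif_neg h]
    calc C * Cᵀ * (C * Cᵀ) = C * (Cᵀ * C) * Cᵀ := by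
          simp only [Matrix.mul_assoc]
      _ = C * Cᵀ := by rw [hCtC, hCe]
  · -- trace
    rw [Matrix.trace_mul_comm, hCtC, Matrix.trace_diagonal]
    calc ∑ j : Fin r, (if (j : ℕ) < d then (1:ℝ) else 0) ≤ ∑ j : Fin r, 1 := by
          apply Finset.sum_le_sum; intro j _; split <;> norm_num
      _ = (r : ℝ) := by simp
  · -- P B = B
    ext i j
    have hcol : WithLp.toLp 2 (fun l => B l j) ∈ S := by
      refine ⟨fun l => B l j, ⟨fun t => if t = j then 1 else 0, ?_⟩, rfl⟩
      show B.mulVec _ = _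
      funext l
      rw [Matrix.mulVec, dotProduct]
      simp
    have := congrFun (hfix (WithLp.toLp 2 fun l => B l j) hcol) i
    rw [Matrix.mulVec, dotProduct] at this
    rw [Matrix.mul_apply]
    exact this

lemma kyfan_arith {m r : ℕ} (s t : Fin m → ℝ) (hmono : Antitone s) (hpos : ∀ i, 0 ≤ s i)
    (ht0 : ∀ i, 0 ≤ t i) (ht1 : ∀ i, t i ≤ 1) (htr : ∑ i, t i ≤ (r : ℝ)) :
    ∑ i, t i * s i ^ 2 ≤ ∑ i ∈ Finset.univ.filter (fun i : Fin m => (i : ℕ) < r), s i ^ 2 := by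
  classical
  by_cases hrm : m ≤ r
  · rw [Finset.filter_true_of_mem (fun i _ => lt_of_lt_of_le i.isLt hrm)]
    apply Finset.sum_le_sum
    intro i _
    exact mul_le_of_le_one_left (sq_nonneg _) (ht1 i)
  · push_neg at hrm
    set ir : Fin m := ⟨r, hrm⟩ with hir
    set c : ℝ := s ir ^ 2 with hc
    have hc0 : 0 ≤ c := sq_nonneg _
    have hfe : Finset.univ.filter (fun i : Fin m => (i : ℕ) < r) = Finset.Iio ir := by
      ext i; simp only [Finset.mem_filter, Finset.mem_univ, true_and, Finset.mem_Iio, Fin.lt_def]; exact Iff.rfl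
    have hcard : (Finset.univ.filter (fun i : Fin m => (i : ℕ) < r)).card = r := by
      rw [hfe, Fin.card_Iio]
    have hsq_ge : ∀ i ∈ Finset.univ.filter (fun i : Fin m => (i : ℕ) < r), c ≤ s i ^ 2 := by
      intro i hi
      rw [Finset.mem_filter] at hi
      have : i ≤ ir := le_of_lt (by rw [Fin.lt_def]; exact hi.2)
      exact pow_le_pow_left₀ (hpos ir) (hmono this) 2
    have hsq_le : ∀ i : Fin m, ¬ ((i : ℕ) < r) → s i ^ 2 ≤ c := by
      intro i hi
      push_neg at hi
      have : ir ≤ i := by rw [Fin.le_def]; exact hi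
      exact pow_le_pow_left₀ (hpos i) (hmono this) 2
    have split : ∑ i, t i * s i ^ 2 = (∑ i, t i * (s i ^ 2 - c)) + c * ∑ i, t i := by
      rw [Finset.mul_sum, ← Finset.sum_add_distrib]
      apply Finset.sum_congr rfl; intro i _; ring
    have h1 : ∑ i, t i * (s i ^ 2 - c)
        ≤ ∑ i ∈ Finset.univ.filter (fun i : Fin m => (i : ℕ) < r), (s i ^ 2 - c) := by
      rw [← Finset.sum_filter_add_sum_filter_not Finset.univ (fun i : Fin m => (i : ℕ) < r)
        (fun i => t i * (s i ^ 2 - c))]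
      have h1a : ∑ i ∈ Finset.univ.filter (fun i : Fin m => (i : ℕ) < r), t i * (s i ^ 2 - c)
          ≤ ∑ i ∈ Finset.univ.filter (fun i : Fin m => (i : ℕ) < r), (s i ^ 2 - c) :=
        Finset.sum_le_sum (fun i hi =>
          mul_le_of_le_one_left (sub_nonneg.2 (hsq_ge i hi)) (ht1 i))
      have h1b : ∑ i ∈ Finset.univ.filter (fun i : Fin m => ¬ ((i : ℕ) < r)), t i * (s i ^ 2 - c)
          ≤ 0 := Finset.sum_nonpos (fun i hi => by
            rw [Finset.mem_filter] at hi
            exact mul_nonpos_of_nonneg_of_nonpos (ht0 i) (sub_nonpos.2 (hsq_le i hi.2)))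
      linarith
    have h2 : ∑ i ∈ Finset.univ.filter (fun i : Fin m => (i : ℕ) < r), (s i ^ 2 - c)
        = (∑ i ∈ Finset.univ.filter (fun i : Fin m => (i : ℕ) < r), s i ^ 2) - r * c := by
      rw [Finset.sum_sub_distrib, Finset.sum_const, hcard, nsmul_eq_mul]
    have h3 : c * ∑ i, t i ≤ c * r := mul_le_mul_of_nonneg_left htr hc0
    linarith


lemma aux_le_one {t : ℝ} (h0 : 0 ≤ t) (hsq : t ^ 2 ≤ t) : t ≤ 1 := by nlinarith

lemma frob_sq {a b : ℕ} (A : Matrix (Fin a) (Fin b) ℝ) :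
    Matrix.trace (A * Aᵀ) = ∑ i, ∑ j, A i j ^ 2 := by
  simp [Matrix.trace, Matrix.diag, Matrix.mul_apply, pow_two]

/-- For any `W`, `X`, and any orthogonal `U` whose columns are
eigenvectors of `(WX)(WX)ᵀ` with (squared) singular values `s` sorted in
decreasing order (i.e. the left singular vectors of `WX`), the matrix
`W' = U_r U_rᵀ W` (with `U_r` the first `r` columns of `U`) has rank at most `r`
and minimizes `‖WX − W'X‖_F` over all rank-`≤ r` matrices. -/
theorem stmt0 {m n k : ℕ} (r : ℕ) (hr : r ≤ m)
    (W : Matrix (Fin m) (Fin n) ℝ) (X : Matrix (Fin n) (Fin k) ℝ)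
    (U : Matrix (Fin m) (Fin m) ℝ) (s : Fin m → ℝ)
    (hU : Uᵀ * U = 1)
    (hsvd : (W * X) * (W * X)ᵀ = U * Matrix.diagonal (fun i => (s i) ^ 2) * Uᵀ)
    (hmono : Antitone s) (hpos : ∀ i, 0 ≤ s i)
    (Ur : Matrix (Fin m) (Fin r) ℝ)
    (hUr : Ur = U.submatrix id (Fin.castLE hr)) :
    (Ur * Urᵀ * W).rank ≤ r ∧
      ∀ W' : Matrix (Fin m) (Fin n) ℝ, W'.rank ≤ r →
        frobNorm (W * X - (Ur * Urᵀ * W) * X) ≤ frobNorm (W * X - W' * X) := by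
  classical
  have hUU : U * Uᵀ = 1 := mul_eq_one_comm.mpr hU
  set χ : Fin m → ℝ := fun i => if (i : ℕ) < r then (1:ℝ) else 0 with hχ
  have hE : ∀ (i : Fin m) (t : Fin r), (Uᵀ * Ur) i t = if (i : ℕ) = (t : ℕ) then (1:ℝ) else 0 := by
    intro i t
    have h1 : (Uᵀ * Ur) i t = (Uᵀ * U) i (Fin.castLE hr t) := by
      rw [hUr]; simp [Matrix.mul_apply, Matrix.submatrix]
    rw [h1, hU]
    simp [Matrix.one_apply, Fin.ext_iff]
  have hQ : Uᵀ * (Ur * Urᵀ) * U = Matrix.diagonal χ := by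
    have h0 : Uᵀ * (Ur * Urᵀ) * U = (Uᵀ * Ur) * (Uᵀ * Ur)ᵀ := by
      rw [Matrix.transpose_mul, Matrix.transpose_transpose]
      simp only [Matrix.mul_assoc]
    rw [h0]
    ext i j
    rw [Matrix.mul_apply, Matrix.diagonal_apply]
    simp only [Matrix.transpose_apply, hE]
    by_cases hij : i = j
    · subst hij
      by_cases hir : (i : ℕ) < r
      · rw [if_pos rfl]
        have hsum1 : ∀ t : Fin r,
            (if (i:ℕ) = (t:ℕ) then (1:ℝ) else 0) * (if (i:ℕ) = (t:ℕ) then (1:ℝ) else 0)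
              = if t = (⟨(i:ℕ), hir⟩ : Fin r) then 1 else 0 := by
          intro t
          by_cases h : (i:ℕ) = (t:ℕ)
          · rw [if_pos h, if_pos (Fin.ext h.symm), one_mul]
          · rw [if_neg h, if_neg (fun hc : t = ⟨(i:ℕ), hir⟩ => h (by rw [hc])), zero_mul]
        rw [Finset.sum_congr rfl (fun t _ => hsum1 t),
          Finset.sum_ite_eq' Finset.univ _ (fun _ => (1:ℝ))]
        simp [hχ, hir]
      · rw [if_pos rfl]
        have hz : ∀ t : Fin r,
            (if (i:ℕ) = (t:ℕ) then (1:ℝ) else 0) * (if (i:ℕ) = (t:ℕ) then (1:ℝ) else 0) = 0 := by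
          intro t
          have hne : (i : ℕ) ≠ (t : ℕ) := fun hc => hir (hc ▸ t.isLt)
          rw [if_neg hne, zero_mul]
        rw [Finset.sum_congr rfl (fun t _ => hz t), Finset.sum_const_zero]
        simp [hχ, hir]
    · rw [if_neg hij]
      apply Finset.sum_eq_zero
      intro t _
      by_cases h1 : (i:ℕ) = (t:ℕ)
      · have h2 : (j:ℕ) ≠ (t:ℕ) := fun hc => hij (Fin.ext (h1.trans hc.symm))
        rw [if_neg h2, mul_zero]
      · rw [if_neg h1, zero_mul]
  have hP : Ur * Urᵀ = U * Matrix.diagonal χ * Uᵀ := by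
    rw [← hQ]
    rw [show U * (Uᵀ * (Ur * Urᵀ) * U) * Uᵀ = (U * Uᵀ) * (Ur * Urᵀ) * (U * Uᵀ) by
      simp only [Matrix.mul_assoc]]
    rw [hUU, Matrix.one_mul, Matrix.mul_one]
  have tconj : ∀ M : Matrix (Fin m) (Fin m) ℝ, Matrix.trace (U * M * Uᵀ) = Matrix.trace M := by
    intro M
    rw [Matrix.mul_assoc, Matrix.trace_mul_comm, Matrix.mul_assoc, hU, Matrix.mul_one]
  constructor
  · calc (Ur * Urᵀ * W).rank ≤ (Ur * Urᵀ).rank := Matrix.rank_mul_le_left _ _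
      _ ≤ Ur.rank := Matrix.rank_mul_le_left _ _
      _ ≤ r := Matrix.rank_le_width Ur
  · intro W' hW'
    set A := W * X with hA
    set D := Matrix.diagonal (fun i : Fin m => s i ^ 2) with hD
    set G1 := Matrix.diagonal (fun i : Fin m => 1 - χ i) with hG1
    have hsvd' : A * Aᵀ = U * D * Uᵀ := hsvd
    have hmul2 : ∀ E1 E2 : Matrix (Fin m) (Fin m) ℝ,
        (U * E1 * Uᵀ) * (U * E2 * Uᵀ) = U * (E1 * E2) * Uᵀ := by
      intro E1 E2
      simp only [Matrix.mul_assoc]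
      rw [← Matrix.mul_assoc Uᵀ U (E2 * Uᵀ), hU, Matrix.one_mul]
    have hPt : (Ur * Urᵀ)ᵀ = Ur * Urᵀ := by
      rw [Matrix.transpose_mul, Matrix.transpose_transpose]
    have h1mP : 1 - Ur * Urᵀ = U * G1 * Uᵀ := by
      have hdd : G1 = 1 - Matrix.diagonal χ := by
        rw [hG1, ← Matrix.diagonal_one, ← Matrix.diagonal_sub]
      rw [hdd, Matrix.mul_sub, Matrix.sub_mul, Matrix.mul_one, hUU, hP]
    have hXt : (U * G1 * Uᵀ)ᵀ = U * G1 * Uᵀ := by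
      rw [Matrix.transpose_mul, Matrix.transpose_mul, Matrix.transpose_transpose,
        hG1, Matrix.diagonal_transpose]
      simp only [Matrix.mul_assoc]
    -- value of the left-hand side
    have hA1 : A - (Ur * Urᵀ) * A = (U * G1 * Uᵀ) * A := by
      have h' : (1 - Ur * Urᵀ) * A = A - (Ur * Urᵀ) * A := by
        rw [Matrix.sub_mul, Matrix.one_mul]
      rw [← h', h1mP]
    have hLtr : Matrix.trace ((A - (Ur * Urᵀ) * A) * (A - (Ur * Urᵀ) * A)ᵀ)
        = ∑ i : Fin m, (if (i : ℕ) < r then 0 else s i ^ 2) := by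
      rw [hA1, Matrix.transpose_mul, hXt]
      rw [show ((U * G1 * Uᵀ) * A) * (Aᵀ * (U * G1 * Uᵀ))
          = (U * G1 * Uᵀ) * (A * Aᵀ) * (U * G1 * Uᵀ) by simp only [Matrix.mul_assoc]]
      rw [hsvd', hmul2 G1 D, hmul2 (G1 * D) G1, tconj]
      rw [hG1, hD, Matrix.diagonal_mul_diagonal, Matrix.diagonal_mul_diagonal,
        Matrix.trace_diagonal]
      apply Finset.sum_congr rfl
      intro i _
      by_cases h : (i : ℕ) < r <;> simp [hχ, h]
    -- the right-hand side
    set B := W' * X with hB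
    have hBrank : B.rank ≤ r := le_trans (Matrix.rank_mul_le_left W' X) hW'
    obtain ⟨Pr, hPrt, hPri, hPrtr, hPrB⟩ := exists_proj r B hBrank
    set R := (1 : Matrix (Fin m) (Fin m) ℝ) - Pr with hR
    have hRt : Rᵀ = R := by rw [hR, Matrix.transpose_sub, Matrix.transpose_one, hPrt]
    have hRP : R * Pr = 0 := by rw [hR, Matrix.sub_mul, Matrix.one_mul, hPri, sub_self]
    have hPR : Pr * R = 0 := by rw [hR, Matrix.mul_sub, Matrix.mul_one, hPri, sub_self]
    have hRR : R * R = R := by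
      rw [hR, Matrix.sub_mul, Matrix.one_mul, Matrix.mul_sub, Matrix.mul_one, hPri]
      abel
    have hRB : R * B = 0 := by rw [hR, Matrix.sub_mul, Matrix.one_mul, hPrB, sub_self]
    set M := A - B with hM
    have hexp : Matrix.trace (M * Mᵀ)
        = Matrix.trace ((Pr * M) * (Pr * M)ᵀ) + Matrix.trace ((R * M) * (R * M)ᵀ)
          + (Matrix.trace ((Pr * M) * (R * M)ᵀ) + Matrix.trace ((R * M) * (Pr * M)ᵀ)) := by
      have hM1 : Pr * M + R * M = M := by
        rw [hR, Matrix.sub_mul, Matrix.one_mul]; abel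
      have h1 : M * Mᵀ = (Pr * M) * (Pr * M)ᵀ + (R * M) * (R * M)ᵀ
          + ((Pr * M) * (R * M)ᵀ + (R * M) * (Pr * M)ᵀ) := by
        calc M * Mᵀ = (Pr * M + R * M) * (Pr * M + R * M)ᵀ := by rw [hM1]
          _ = _ := by
              rw [Matrix.transpose_add, Matrix.add_mul, Matrix.mul_add, Matrix.mul_add]
              abel
      rw [h1, Matrix.trace_add, Matrix.trace_add, Matrix.trace_add]
    have hc1 : Matrix.trace ((Pr * M) * (R * M)ᵀ) = 0 := by
      rw [Matrix.transpose_mul, hRt]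
      rw [show (Pr * M) * (Mᵀ * R) = Pr * (M * (Mᵀ * R)) by simp only [Matrix.mul_assoc]]
      rw [Matrix.trace_mul_comm]
      rw [show (M * (Mᵀ * R)) * Pr = M * (Mᵀ * (R * Pr)) by simp only [Matrix.mul_assoc]]
      rw [hRP, Matrix.mul_zero, Matrix.mul_zero, Matrix.trace_zero]
    have hc2 : Matrix.trace ((R * M) * (Pr * M)ᵀ) = 0 := by
      rw [Matrix.transpose_mul, hPrt]
      rw [show (R * M) * (Mᵀ * Pr) = R * (M * (Mᵀ * Pr)) by simp only [Matrix.mul_assoc]]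
      rw [Matrix.trace_mul_comm]
      rw [show (M * (Mᵀ * Pr)) * R = M * (Mᵀ * (Pr * R)) by simp only [Matrix.mul_assoc]]
      rw [hPR, Matrix.mul_zero, Matrix.mul_zero, Matrix.trace_zero]
    have hpos1 : 0 ≤ Matrix.trace ((Pr * M) * (Pr * M)ᵀ) := by
      rw [frob_sq]; positivity
    have hRMeq : R * M = R * A := by rw [hM, Matrix.mul_sub, hRB, sub_zero]
    have h2 : Matrix.trace ((R * M) * (R * M)ᵀ)
        = Matrix.trace (A * Aᵀ) - Matrix.trace ((A * Aᵀ) * Pr) := by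
      rw [hRMeq, Matrix.transpose_mul, hRt]
      rw [show (R * A) * (Aᵀ * R) = R * ((A * Aᵀ) * R) by simp only [Matrix.mul_assoc]]
      rw [Matrix.trace_mul_comm]
      rw [show ((A * Aᵀ) * R) * R = (A * Aᵀ) * (R * R) by simp only [Matrix.mul_assoc]]
      rw [hRR, hR, Matrix.mul_sub, Matrix.mul_one, Matrix.trace_sub]
    have htrAA : Matrix.trace (A * Aᵀ) = ∑ i, s i ^ 2 := by
      rw [hsvd', tconj, hD, Matrix.trace_diagonal]
    set G : Matrix (Fin m) (Fin m) ℝ := Uᵀ * Pr * U with hG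
    have hGtrace : Matrix.trace ((A * Aᵀ) * Pr) = Matrix.trace (D * G) := by
      rw [hsvd']
      rw [show (U * D * Uᵀ) * Pr = U * (D * (Uᵀ * Pr)) by simp only [Matrix.mul_assoc]]
      rw [Matrix.trace_mul_comm]
      rw [show (D * (Uᵀ * Pr)) * U = D * (Uᵀ * Pr * U) by simp only [Matrix.mul_assoc]]
    have hGt : Gᵀ = G := by
      rw [hG, Matrix.transpose_mul, Matrix.transpose_mul, Matrix.transpose_transpose, hPrt]
      simp only [Matrix.mul_assoc]
    have hGG : G * G = G := by
      rw [hG]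
      rw [show (Uᵀ * Pr * U) * (Uᵀ * Pr * U) = Uᵀ * (Pr * ((U * Uᵀ) * (Pr * U)))
        by simp only [Matrix.mul_assoc], hUU, Matrix.one_mul]
      simp only [Matrix.mul_assoc]
      rw [← Matrix.mul_assoc Pr Pr U, hPri]
    have hGtr : Matrix.trace G ≤ (r : ℝ) := by
      rw [hG, show Uᵀ * Pr * U = Uᵀ * (Pr * U) by simp only [Matrix.mul_assoc],
        Matrix.trace_mul_comm, show (Pr * U) * Uᵀ = Pr * (U * Uᵀ) by
          simp only [Matrix.mul_assoc], hUU, Matrix.mul_one]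
      exact hPrtr
    have hGdiag : ∀ i, G i i = ∑ j, (G i j) ^ 2 := by
      intro i
      conv_lhs => rw [← hGG]
      rw [Matrix.mul_apply]
      apply Finset.sum_congr rfl
      intro j _
      rw [show G j i = G i j from
        (Matrix.transpose_apply G i j).symm.trans (congrFun (congrFun hGt i) j), sq]
    have ht0 : ∀ i, 0 ≤ G i i := by
      intro i; rw [hGdiag i]; positivity
    have ht1 : ∀ i, G i i ≤ 1 := by
      intro i
      have hsq : G i i ^ 2 ≤ G i i := by
        calc G i i ^ 2 ≤ ∑ j, (G i j) ^ 2 :=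
              Finset.single_le_sum (f := fun j => (G i j) ^ 2)
                (fun j _ => sq_nonneg _) (Finset.mem_univ i)
          _ = G i i := (hGdiag i).symm
      exact aux_le_one (ht0 i) hsq
    have htsum : ∑ i, G i i ≤ (r : ℝ) := by
      rw [show ∑ i, G i i = Matrix.trace G from rfl]; exact hGtr
    have hDG : Matrix.trace (D * G) = ∑ i, G i i * s i ^ 2 := by
      rw [Matrix.trace, hD]
      apply Finset.sum_congr rfl
      intro i _
      rw [Matrix.diag]
      rw [Matrix.diagonal_mul]
      ring
    have hkf : ∑ i, G i i * s i ^ 2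
        ≤ ∑ i ∈ Finset.univ.filter (fun i : Fin m => (i : ℕ) < r), s i ^ 2 :=
      kyfan_arith s (fun i => G i i) hmono hpos ht0 ht1 htsum
    have hτ : (∑ i : Fin m, (if (i : ℕ) < r then 0 else s i ^ 2))
        = (∑ i, s i ^ 2)
          - ∑ i ∈ Finset.univ.filter (fun i : Fin m => (i : ℕ) < r), s i ^ 2 := by
      rw [← Finset.sum_filter_add_sum_filter_not Finset.univ
          (fun i : Fin m => (i : ℕ) < r) (fun i => s i ^ 2)]
      rw [← Finset.sum_filter_add_sum_filter_not Finset.univ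
          (fun i : Fin m => (i : ℕ) < r) (fun i => if (i : ℕ) < r then (0:ℝ) else s i ^ 2)]
      have e1 : ∑ i ∈ Finset.univ.filter (fun i : Fin m => (i : ℕ) < r),
          (if (i : ℕ) < r then (0:ℝ) else s i ^ 2) = 0 :=
        Finset.sum_eq_zero (fun i hi => by
          rw [Finset.mem_filter] at hi; rw [if_pos hi.2])
      have e2 : ∑ i ∈ Finset.univ.filter (fun i : Fin m => ¬ ((i : ℕ) < r)),
          (if (i : ℕ) < r then (0:ℝ) else s i ^ 2)
          = ∑ i ∈ Finset.univ.filter (fun i : Fin m => ¬ ((i : ℕ) < r)), s i ^ 2 :=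
        Finset.sum_congr rfl (fun i hi => by
          rw [Finset.mem_filter] at hi; rw [if_neg hi.2])
      rw [e1, e2]
      ring
    -- put everything together
    have hfinal : Matrix.trace ((A - (Ur * Urᵀ) * A) * (A - (Ur * Urᵀ) * A)ᵀ)
        ≤ Matrix.trace (M * Mᵀ) := by
      rw [hLtr]
      rw [hexp, hc1, hc2, h2, htrAA, hGtrace, hDG]
      linarith
    -- convert to Frobenius norms
    have hgoal1 : (Ur * Urᵀ * W) * X = (Ur * Urᵀ) * A := by
      rw [hA]; simp only [Matrix.mul_assoc]
    rw [hgoal1]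
    show Real.sqrt _ ≤ Real.sqrt _
    apply Real.sqrt_le_sqrt
    rw [← frob_sq, ← frob_sq]
    exact hfinal
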